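/- arXiv:1311.6389 — 3 statements merged into one kernel-verified Lean document; each statement's English description precedes it below -/
import Mathlib

section
/- The set of processes expressible as a difference of two nonnegative supermartingales is closed under the pointwise minimum operation: if X = X¹ − Y¹ and Y = X² − Y², with X¹, Y¹, X², Y² nonnegative supermartingales, then X ∧ Y is also a difference of two nonnegative supermartingales. -/
open MeasureTheory Filter

private theorem my_supermartingale_inf {Ω : Type*} {m : MeasurableSpace Ω}
    {μ : Measure Ω} {ℱ : Filtration ℕ m} {f g : ℕ → Ω → ℝ}
    (hf : Supermartingale f ℱ μ) (hg : Supermartingale g ℱ μ) :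
    Supermartingale (f ⊓ g) ℱ μ := by
  have h := (hf.neg.sup hg.neg).neg
  have : -((-f) ⊔ (-g)) = f ⊓ g := by
    funext n ω
    simp only [Pi.neg_apply, Pi.sup_apply, Pi.inf_apply, ← neg_inf, neg_neg]
  rwa [this] at h

/-- Differences of nonnegative supermartingales are closed under pointwise minimum. -/
theorem inf_diff_nonneg_supermartingales
    {Ω : Type*} {m : MeasurableSpace Ω} {μ : Measure Ω} [IsProbabilityMeasure μ]
    {ℱ : Filtration ℕ m} {X1 Y1 X2 Y2 : ℕ → Ω → ℝ}
    (hX1 : Supermartingale X1 ℱ μ) (hY1 : Supermartingale Y1 ℱ μ)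
    (hX2 : Supermartingale X2 ℱ μ) (hY2 : Supermartingale Y2 ℱ μ)
    (hX10 : ∀ n, 0 ≤ᵐ[μ] X1 n) (hY10 : ∀ n, 0 ≤ᵐ[μ] Y1 n)
    (hX20 : ∀ n, 0 ≤ᵐ[μ] X2 n) (hY20 : ∀ n, 0 ≤ᵐ[μ] Y2 n) :
    ∃ A B : ℕ → Ω → ℝ, Supermartingale A ℱ μ ∧ Supermartingale B ℱ μ ∧
      (∀ n, 0 ≤ᵐ[μ] A n) ∧ (∀ n, 0 ≤ᵐ[μ] B n) ∧
      (X1 - Y1) ⊓ (X2 - Y2) = A - B := by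
  refine ⟨(X1 + Y2) ⊓ (X2 + Y1), Y1 + Y2,
    my_supermartingale_inf (hX1.add hY2) (hX2.add hY1), hY1.add hY2, ?_, ?_, ?_⟩
  · intro n
    filter_upwards [hX10 n, hY10 n, hX20 n, hY20 n] with ω h1 h2 h3 h4
    simp only [Pi.inf_apply, Pi.add_apply, Pi.zero_apply, le_inf_iff] at *
    constructor <;> positivity
  · intro n
    filter_upwards [hY10 n, hY20 n] with ω h2 h4
    simp only [Pi.add_apply, Pi.zero_apply] at *
    positivity
  · funext n ω
    simp only [Pi.inf_apply, Pi.sub_apply, Pi.add_apply]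
    rw [← min_sub_sub_right]
    ring_nf
end

section
/- The space of differences of local supermartingales is a Riesz space: if M¹, M² are local supermartingales and N¹, N² are local submartingales, then (M¹ + N¹) ∧ (M² + N²) = ((M¹ − N²) ∧ (M² − N¹)) + (N¹ + N²), which is again a sum of a local supermartingale and a local submartingale. -/
open MeasureTheory Filter

/-- `M` is a local supermartingale: there is an increasing sequence of stopping times
tending to infinity such that each stopped process is a supermartingale. -/
def IsLocalSupermartingale {Ω : Type*} {m : MeasurableSpace Ω}
    (ℱ : MeasureTheory.Filtration ℕ m) (μ : MeasureTheory.Measure Ω)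
    (M : ℕ → Ω → ℝ) : Prop :=
  ∃ T : ℕ → Ω → ℕ,
    (∀ k, MeasureTheory.IsStoppingTime ℱ (fun ω => (T k ω : WithTop ℕ))) ∧
    (∀ k ω, T k ω ≤ T (k + 1) ω) ∧
    (∀ ω, Filter.Tendsto (fun k => T k ω) Filter.atTop Filter.atTop) ∧
    ∀ k, MeasureTheory.Supermartingale (MeasureTheory.stoppedProcess M (fun ω => (T k ω : WithTop ℕ))) ℱ μ

/-- `N` is a local submartingale iff `-N` is a local supermartingale. -/
def IsLocalSubmartingale {Ω : Type*} {m : MeasurableSpace Ω}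
    (ℱ : MeasureTheory.Filtration ℕ m) (μ : MeasureTheory.Measure Ω)
    (N : ℕ → Ω → ℝ) : Prop :=
  IsLocalSupermartingale ℱ μ (-N)

/-- `X` is a difference of two local supermartingales. -/
def IsDiffLocalSupermartingale {Ω : Type*} {m : MeasurableSpace Ω}
    (ℱ : MeasureTheory.Filtration ℕ m) (μ : MeasureTheory.Measure Ω)
    (X : ℕ → Ω → ℝ) : Prop :=
  ∃ A B : ℕ → Ω → ℝ, IsLocalSupermartingale ℱ μ A ∧ IsLocalSupermartingale ℱ μ B ∧
    X = A - B

section Aux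

variable {Ω : Type*} {m : MeasurableSpace Ω} {μ : MeasureTheory.Measure Ω}
  {ℱ : MeasureTheory.Filtration ℕ m}

lemma stoppedProcess_min' (A : ℕ → Ω → ℝ) (τ σ : Ω → ℕ) :
    MeasureTheory.stoppedProcess A (fun ω => ((min (τ ω) (σ ω) : ℕ) : WithTop ℕ)) =
      MeasureTheory.stoppedProcess (MeasureTheory.stoppedProcess A (fun ω => (τ ω : WithTop ℕ)))
        (fun ω => (σ ω : WithTop ℕ)) := by
  funext n ω
  show A (min n (min (τ ω) (σ ω))) ω = A (min (min n (σ ω)) (τ ω)) ω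
  congr 1
  omega

lemma Supermartingale.stoppedProcess' [MeasureTheory.IsFiniteMeasure μ]
    {f : ℕ → Ω → ℝ} {τ : Ω → ℕ}
    (h : MeasureTheory.Supermartingale f ℱ μ) (hτ : MeasureTheory.IsStoppingTime ℱ (fun ω => (τ ω : WithTop ℕ))) :
    MeasureTheory.Supermartingale (MeasureTheory.stoppedProcess f (fun ω => (τ ω : WithTop ℕ))) ℱ μ := by
  have h1 : MeasureTheory.Submartingale (MeasureTheory.stoppedProcess (-f) (fun ω => (τ ω : WithTop ℕ))) ℱ μ :=
    h.neg.stoppedProcess hτ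
  have h2 : MeasureTheory.stoppedProcess (-f) (fun ω => (τ ω : WithTop ℕ)) = -(MeasureTheory.stoppedProcess f (fun ω => (τ ω : WithTop ℕ))) := by
    funext n ω; simp [MeasureTheory.stoppedProcess]
  rw [h2] at h1
  simpa using h1.neg

lemma Supermartingale.inf' {f g : ℕ → Ω → ℝ}
    (hf : MeasureTheory.Supermartingale f ℱ μ) (hg : MeasureTheory.Supermartingale g ℱ μ) :
    MeasureTheory.Supermartingale (f ⊓ g) ℱ μ := by
  have h := (hf.neg.sup hg.neg).neg
  have : -(-f ⊔ -g) = f ⊓ g := by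
    funext n ω; simp [min_def, max_def]; split <;> split <;> simp_all <;> linarith
  rwa [this] at h

lemma IsLocalSupermartingale.common [MeasureTheory.IsFiniteMeasure μ] {A B : ℕ → Ω → ℝ}
    (hA : IsLocalSupermartingale ℱ μ A) (hB : IsLocalSupermartingale ℱ μ B) :
    ∃ U : ℕ → Ω → ℕ,
      (∀ k, MeasureTheory.IsStoppingTime ℱ (fun ω => (U k ω : WithTop ℕ))) ∧
      (∀ k ω, U k ω ≤ U (k + 1) ω) ∧
      (∀ ω, Filter.Tendsto (fun k => U k ω) Filter.atTop Filter.atTop) ∧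
      (∀ k, MeasureTheory.Supermartingale (MeasureTheory.stoppedProcess A (fun ω => (U k ω : WithTop ℕ))) ℱ μ) ∧
      (∀ k, MeasureTheory.Supermartingale (MeasureTheory.stoppedProcess B (fun ω => (U k ω : WithTop ℕ))) ℱ μ) := by
  obtain ⟨T, hTst, hTmono, hTtend, hTsup⟩ := hA
  obtain ⟨S, hSst, hSmono, hStend, hSsup⟩ := hB
  refine ⟨fun k ω => min (T k ω) (S k ω), fun k => (hTst k).min (hSst k),
    fun k ω => le_min ((min_le_left _ _).trans (hTmono k ω))
      ((min_le_right _ _).trans (hSmono k ω)),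
    fun ω => ?_, fun k => ?_, fun k => ?_⟩
  · exact Filter.tendsto_atTop.2 fun b =>
      ((Filter.tendsto_atTop.1 (hTtend ω) b).and (Filter.tendsto_atTop.1 (hStend ω) b)).mono
        fun k hk => le_min hk.1 hk.2
  · rw [stoppedProcess_min']
    exact Supermartingale.stoppedProcess' (hTsup k) (hSst k)
  · have heq : MeasureTheory.stoppedProcess B
          (fun ω => (((fun k ω => min (T k ω) (S k ω)) k ω : ℕ) : WithTop ℕ)) =
        MeasureTheory.stoppedProcess (MeasureTheory.stoppedProcess B (fun ω => (S k ω : WithTop ℕ)))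
          (fun ω => (T k ω : WithTop ℕ)) := by
      funext n ω
      show B (min n (min (T k ω) (S k ω))) ω = B (min (min n (T k ω)) (S k ω)) ω
      congr 1; omega
    rw [heq]
    exact Supermartingale.stoppedProcess' (hSsup k) (hTst k)

lemma IsLocalSupermartingale.add' [MeasureTheory.IsFiniteMeasure μ] {A B : ℕ → Ω → ℝ}
    (hA : IsLocalSupermartingale ℱ μ A) (hB : IsLocalSupermartingale ℱ μ B) :
    IsLocalSupermartingale ℱ μ (A + B) := by
  obtain ⟨U, h1, h2, h3, h4, h5⟩ := hA.common hB
  refine ⟨U, h1, h2, h3, fun k => ?_⟩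
  have : MeasureTheory.stoppedProcess (A + B) (fun ω => (U k ω : WithTop ℕ)) =
      MeasureTheory.stoppedProcess A (fun ω => (U k ω : WithTop ℕ)) + MeasureTheory.stoppedProcess B (fun ω => (U k ω : WithTop ℕ)) := by
    funext n ω; simp [MeasureTheory.stoppedProcess]
  rw [this]
  exact (h4 k).add (h5 k)

lemma IsLocalSupermartingale.inf' [MeasureTheory.IsFiniteMeasure μ] {A B : ℕ → Ω → ℝ}
    (hA : IsLocalSupermartingale ℱ μ A) (hB : IsLocalSupermartingale ℱ μ B) :
    IsLocalSupermartingale ℱ μ (A ⊓ B) := by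
  obtain ⟨U, h1, h2, h3, h4, h5⟩ := hA.common hB
  refine ⟨U, h1, h2, h3, fun k => ?_⟩
  have : MeasureTheory.stoppedProcess (A ⊓ B) (fun ω => (U k ω : WithTop ℕ)) =
      MeasureTheory.stoppedProcess A (fun ω => (U k ω : WithTop ℕ)) ⊓ MeasureTheory.stoppedProcess B (fun ω => (U k ω : WithTop ℕ)) := by
    funext n ω; simp [MeasureTheory.stoppedProcess]
  rw [this]
  exact Supermartingale.inf' (h4 k) (h5 k)

end Aux

/-- The lattice identity for sums of local supermartingales and local submartingales,
showing the space of differences of local supermartingales is a Riesz space. -/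
theorem inf_add_localSupermartingale_localSubmartingale
    {Ω : Type*} {m : MeasurableSpace Ω} {μ : Measure Ω} [IsProbabilityMeasure μ]
    {ℱ : Filtration ℕ m} {M1 M2 N1 N2 : ℕ → Ω → ℝ}
    (hM1 : IsLocalSupermartingale ℱ μ M1) (hM2 : IsLocalSupermartingale ℱ μ M2)
    (hN1 : IsLocalSubmartingale ℱ μ N1) (hN2 : IsLocalSubmartingale ℱ μ N2) :
    (M1 + N1) ⊓ (M2 + N2) = ((M1 - N2) ⊓ (M2 - N1)) + (N1 + N2) ∧
      ∃ S T : ℕ → Ω → ℝ, IsLocalSupermartingale ℱ μ S ∧ IsLocalSubmartingale ℱ μ T ∧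
        (M1 + N1) ⊓ (M2 + N2) = S + T := by
  have key : (M1 + N1) ⊓ (M2 + N2) = ((M1 - N2) ⊓ (M2 - N1)) + (N1 + N2) := by
    funext n ω
    simp only [Pi.inf_apply, Pi.add_apply, Pi.sub_apply]
    rw [← min_add_add_right]
    congr 1 <;> ring
  refine ⟨key, (M1 - N2) ⊓ (M2 - N1), N1 + N2, ?_, ?_, key⟩
  · have h1 : M1 - N2 = M1 + -N2 := by funext n ω; simp [sub_eq_add_neg]
    have h2 : M2 - N1 = M2 + -N1 := by funext n ω; simp [sub_eq_add_neg]
    rw [h1, h2]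
    exact (hM1.add' hN2).inf' (hM2.add' hN1)
  · have h3 : -(N1 + N2) = -N1 + -N2 := by funext n ω; simp; ring
    unfold IsLocalSubmartingale
    rw [h3]
    exact hN1.add' hN2
end

section
/- The set of nonnegative supermartingales is a wedge that generates the space of quasimartingales but is not a cone of a vector space structure on itself: it is closed under addition and multiplication by nonnegative scalars, and every quasimartingale (process of finite variation Var(X) < ∞ with integrable marginals) equals a difference of two nonnegative supermartingales (Rao decomposition). -/
open MeasureTheory Filter Topology
open scoped ENNReal

/-- The term of the (quasimartingale) variation of `X` associated with a finite
partition `0 = t₀ < t₁ < ⋯ < t_n`: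
`∑_{i<n} E|X_{tᵢ} − E[X_{tᵢ₊₁} | F_{tᵢ}]| + E|X_{t_n}|`. -/
noncomputable def variationTerm {Ω : Type*} {m : MeasurableSpace Ω}
    (ℱ : MeasureTheory.Filtration ℕ m) (μ : MeasureTheory.Measure Ω)
    (X : ℕ → Ω → ℝ) {n : ℕ} (t : Fin (n + 1) → ℕ) : ℝ :=
  (∑ i : Fin n,
      ∫ ω, |X (t i.castSucc) ω - (μ[X (t i.succ) | ℱ (t i.castSucc)]) ω| ∂μ) +
    ∫ ω, |X (t (Fin.last n)) ω| ∂μ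

section Aux

variable {Ω : Type*} {m : MeasurableSpace Ω} {μ : Measure Ω} [IsProbabilityMeasure μ]
  (ℱ : Filtration ℕ m)

noncomputable def raoF (ℱ : Filtration ℕ m) (μ : Measure Ω) (φ ψ : ℕ → Ω → ℝ) (n j : ℕ) :
    Ω → ℝ :=
  fun ω => (∑ k ∈ Finset.Ico n (n + j), φ k ω) + ψ (n + j) ω

lemma raoF_int (φ ψ : ℕ → Ω → ℝ) (hφi : ∀ k, Integrable (φ k) μ)
    (hψi : ∀ k, Integrable (ψ k) μ) (n j : ℕ) : Integrable (raoF ℱ μ φ ψ n j) μ := by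
  exact (integrable_finset_sum _ (fun k _ => hφi k)).add (hψi (n + j))

lemma raoF_nonneg (φ ψ : ℕ → Ω → ℝ) (hφ0 : ∀ k ω, 0 ≤ φ k ω) (hψ0 : ∀ k ω, 0 ≤ ψ k ω)
    (n j : ℕ) (ω : Ω) : 0 ≤ raoF ℱ μ φ ψ n j ω :=
  add_nonneg (Finset.sum_nonneg fun k _ => hφ0 k ω) (hψ0 _ ω)

lemma raoF_succ_top (φ ψ : ℕ → Ω → ℝ) (n j : ℕ) :
    raoF ℱ μ φ ψ n (j + 1) =
      raoF ℱ μ φ ψ n j + (φ (n + j) + ψ (n + j + 1) - ψ (n + j)) := by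
  funext ω
  simp only [raoF, Pi.add_apply, Pi.sub_apply]
  rw [show n + (j + 1) = (n + j) + 1 from rfl, Finset.sum_Ico_succ_top (Nat.le_add_right n j)]
  ring

lemma raoF_succ_bot (φ ψ : ℕ → Ω → ℝ) (n j : ℕ) :
    raoF ℱ μ φ ψ n (j + 1) = fun ω => φ n ω + raoF ℱ μ φ ψ (n + 1) j ω := by
  funext ω
  have h1 : n + (j + 1) = (n + 1) + j := by omega
  simp only [raoF, h1]
  rw [Finset.sum_eq_sum_Ico_succ_bot (by omega : n < n + 1 + j)]
  ring

/-- One-step a.e. monotonicity of `j ↦ μ[raoF n j | ℱ n]`. -/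
lemma raoG_mono (φ ψ : ℕ → Ω → ℝ) (hφi : ∀ k, Integrable (φ k) μ)
    (hψi : ∀ k, Integrable (ψ k) μ) (hφ0 : ∀ k ω, 0 ≤ φ k ω)
    (hstep : ∀ k, ψ k ≤ᵐ[μ] φ k + μ[ψ (k + 1)|ℱ k]) (n j : ℕ) :
    μ[raoF ℱ μ φ ψ n j|ℱ n] ≤ᵐ[μ] μ[raoF ℱ μ φ ψ n (j + 1)|ℱ n] := by
  have h1 : μ[raoF ℱ μ φ ψ n (j + 1)|ℱ n] =ᵐ[μ]
      μ[raoF ℱ μ φ ψ n j|ℱ n] + (μ[φ (n + j)|ℱ n] + μ[ψ (n + j + 1)|ℱ n] - μ[ψ (n + j)|ℱ n]) := by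
    rw [raoF_succ_top]
    refine (condExp_add (raoF_int ℱ φ ψ hφi hψi n j)
      (((hφi _).add (hψi _)).sub (hψi _)) _).trans ?_
    refine EventuallyEq.add (EventuallyEq.refl _ _) ?_
    refine (condExp_sub ((hφi _).add (hψi _)) (hψi _) _).trans ?_
    exact EventuallyEq.sub ((condExp_add (hφi _) (hψi _) _).trans (EventuallyEq.refl _ _))
      (EventuallyEq.refl _ _)
  -- ψ(n+j) bound after conditioning on ℱ n
  have h2 : μ[ψ (n + j)|ℱ n] ≤ᵐ[μ] μ[φ (n + j)|ℱ n] + μ[ψ (n + j + 1)|ℱ n] := by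
    have hmono := condExp_mono (m := ℱ n) (hψi (n + j))
      ((hφi (n + j)).add integrable_condExp) (hstep (n + j))
    have hadd : μ[φ (n + j) + μ[ψ (n + j + 1)|ℱ (n + j)]|ℱ n] =ᵐ[μ]
        μ[φ (n + j)|ℱ n] + μ[μ[ψ (n + j + 1)|ℱ (n + j)]|ℱ n] :=
      condExp_add (hφi _) integrable_condExp _
    have htower : μ[μ[ψ (n + j + 1)|ℱ (n + j)]|ℱ n] =ᵐ[μ] μ[ψ (n + j + 1)|ℱ n] :=
      condExp_condExp_of_le (ℱ.mono (Nat.le_add_right n j)) (ℱ.le (n + j))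
    filter_upwards [hmono, hadd, htower] with ω hω h1ω h2ω
    simp only [Pi.add_apply] at hω h1ω ⊢
    linarith
  filter_upwards [h1, h2] with ω h1ω h2ω
  rw [h1ω]
  simp only [Pi.add_apply, Pi.sub_apply] at h2ω ⊢
  linarith


/-- Rao's construction: the increasing limit of `μ[raoF φ ψ n j | ℱ n]` defines a
nonnegative supermartingale-like process. -/
lemma rao_aux (φ ψ : ℕ → Ω → ℝ) (hφi : ∀ k, Integrable (φ k) μ)
    (hψi : ∀ k, Integrable (ψ k) μ) (hφ0 : ∀ k ω, 0 ≤ φ k ω) (hψ0 : ∀ k ω, 0 ≤ ψ k ω)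
    (hstep : ∀ k, ψ k ≤ᵐ[μ] φ k + μ[ψ (k + 1)|ℱ k]) (C : ℝ)
    (hC : ∀ n j, ∫ ω, raoF ℱ μ φ ψ n j ω ∂μ ≤ C) :
    ∃ A : ℕ → Ω → ℝ, Adapted ℱ A ∧ (∀ n, Integrable (A n) μ) ∧ (∀ n ω, 0 ≤ A n ω) ∧
      (∀ n, μ[A (n + 1)|ℱ n] ≤ᵐ[μ] A n) ∧
      (∀ n, ∀ᵐ ω ∂μ, Tendsto (fun j => (μ[raoF ℱ μ φ ψ n j|ℱ n]) ω) atTop (𝓝 (A n ω))) := by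
  have hFint : ∀ n j, Integrable (raoF ℱ μ φ ψ n j) μ := raoF_int ℱ φ ψ hφi hψi
  set G : ℕ → ℕ → Ω → ℝ := fun n j => μ[raoF ℱ μ φ ψ n j|ℱ n] with hG
  have hGint : ∀ n j, Integrable (G n j) μ := fun n j => integrable_condExp
  have hGnn : ∀ n j, 0 ≤ᵐ[μ] G n j := fun n j =>
    condExp_nonneg (Eventually.of_forall (raoF_nonneg ℱ φ ψ hφ0 hψ0 n j))
  have hGsm : ∀ n j, StronglyMeasurable[ℱ n] (G n j) := fun n j => stronglyMeasurable_condExp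
  have hGmono : ∀ n, ∀ᵐ ω ∂μ, Monotone fun j => G n j ω := by
    intro n
    have h := (ae_all_iff.2 fun j => raoG_mono ℱ φ ψ hφi hψi hφ0 hstep n j)
    filter_upwards [h] with ω hω
    exact monotone_nat_of_le_succ fun j => hω j
  set g : ℕ → ℕ → Ω → ℝ≥0∞ := fun n j ω => ENNReal.ofReal (G n j ω) with hg
  have hgm : ∀ n j, Measurable[ℱ n] (g n j) := fun n j =>
    (hGsm n j).measurable.ennreal_ofReal
  have hgm' : ∀ n j, Measurable (g n j) := fun n j =>
    (hgm n j).mono (ℱ.le n) le_rfl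
  have hgmono : ∀ n, ∀ᵐ ω ∂μ, Monotone fun j => g n j ω := by
    intro n
    filter_upwards [hGmono n] with ω hω
    exact fun i j hij => ENNReal.ofReal_le_ofReal (hω hij)
  -- integral bounds
  have hGieq : ∀ n j, ∫ ω, G n j ω ∂μ = ∫ ω, raoF ℱ μ φ ψ n j ω ∂μ := fun n j =>
    integral_condExp (ℱ.le n)
  have hlint : ∀ n j, ∫⁻ ω, g n j ω ∂μ = ENNReal.ofReal (∫ ω, G n j ω ∂μ) := fun n j =>
    (ofReal_integral_eq_lintegral_ofReal (hGint n j) (hGnn n j)).symm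
  have hlint_le : ∀ n j, ∫⁻ ω, g n j ω ∂μ ≤ ENNReal.ofReal C := by
    intro n j
    rw [hlint n j, hGieq n j]
    exact ENNReal.ofReal_le_ofReal (hC n j)
  have hsupmeas : ∀ n, Measurable[ℱ n] fun ω => ⨆ j, g n j ω := fun n =>
    Measurable.iSup fun j => hgm n j
  have hsupmeas' : ∀ n, Measurable fun ω => ⨆ j, g n j ω := fun n =>
    (hsupmeas n).mono (ℱ.le n) le_rfl
  have hsuplint : ∀ n, ∫⁻ ω, (⨆ j, g n j ω) ∂μ ≤ ENNReal.ofReal C := by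
    intro n
    rw [lintegral_iSup' (fun j => (hgm' n j).aemeasurable) (hgmono n)]
    exact iSup_le fun j => hlint_le n j
  have hsupfin : ∀ n, ∀ᵐ ω ∂μ, (⨆ j, g n j ω) < ∞ := fun n =>
    ae_lt_top (hsupmeas' n) (lt_of_le_of_lt (hsuplint n) ENNReal.ofReal_lt_top).ne
  set A : ℕ → Ω → ℝ := fun n ω => (⨆ j, g n j ω).toReal with hA
  have hAadp : Adapted ℱ A := fun n => (hsupmeas n).ennreal_toReal
  have hAint : ∀ n, Integrable (A n) μ := fun n =>
    integrable_toReal_of_lintegral_ne_top (hsupmeas' n).aemeasurable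
      (lt_of_le_of_lt (hsuplint n) ENNReal.ofReal_lt_top).ne
  have hA0 : ∀ n ω, 0 ≤ A n ω := fun n ω => ENNReal.toReal_nonneg
  -- a.e. convergence of G n j to A n
  have htends : ∀ n, ∀ᵐ ω ∂μ, Tendsto (fun j => G n j ω) atTop (𝓝 (A n ω)) := by
    intro n
    filter_upwards [hGmono n, hsupfin n, ae_all_iff.2 (hGnn n)] with ω hmon hfin hnn
    have h1 : Tendsto (fun j => g n j ω) atTop (𝓝 (⨆ j, g n j ω)) :=
      tendsto_atTop_iSup fun i j hij => ENNReal.ofReal_le_ofReal (hmon hij)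
    have h2 : Tendsto (fun j => (g n j ω).toReal) atTop (𝓝 (A n ω)) :=
      (ENNReal.tendsto_toReal hfin.ne).comp h1
    refine h2.congr fun j => ?_
    simp only [hg, ENNReal.toReal_ofReal (hnn j)]
  -- set-integral formula
  have hset_eq : ∀ n (s : Set Ω), MeasurableSet s →
      ∫ ω in s, A n ω ∂μ = (⨆ j, ENNReal.ofReal (∫ ω in s, G n j ω ∂μ)).toReal := by
    intro n s hs
    have h1 : ∫ ω in s, A n ω ∂μ = (∫⁻ ω in s, (⨆ j, g n j ω) ∂μ).toReal :=
      integral_toReal ((hsupmeas' n).aemeasurable) (ae_restrict_of_ae (hsupfin n))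
    have h2 : ∫⁻ ω in s, (⨆ j, g n j ω) ∂μ = ⨆ j, ∫⁻ ω in s, g n j ω ∂μ :=
      lintegral_iSup' (fun j => (hgm' n j).aemeasurable) (ae_restrict_of_ae (hgmono n))
    have h3 : ∀ j, ∫⁻ ω in s, g n j ω ∂μ = ENNReal.ofReal (∫ ω in s, G n j ω ∂μ) := fun j =>
      (ofReal_integral_eq_lintegral_ofReal ((hGint n j).integrableOn)
        (ae_restrict_of_ae (hGnn n j))).symm
    rw [h1, h2]
    congr 1
    exact iSup_congr h3
  have hset_le_C : ∀ n j (s : Set Ω), MeasurableSet s →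
      ∫ ω in s, G n j ω ∂μ ≤ C := by
    intro n j s hs
    refine le_trans (setIntegral_le_integral (hGint n j) (hGnn n j)) ?_
    rw [hGieq n j]; exact hC n j
  -- supermartingale property
  have hsuper : ∀ n, μ[A (n + 1)|ℱ n] ≤ᵐ[μ] A n := by
    intro n
    -- set integral comparison
    have hset : ∀ s : Set Ω, MeasurableSet[ℱ n] s →
        ∫ ω in s, A (n + 1) ω ∂μ ≤ ∫ ω in s, A n ω ∂μ := by
      intro s hs
      have hsm' : MeasurableSet s := ℱ.le n s hs
      rw [hset_eq (n + 1) s hsm', hset_eq n s hsm']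
      have hle : ∀ j, ∫ ω in s, G (n + 1) j ω ∂μ ≤ ∫ ω in s, G n (j + 1) ω ∂μ := by
        intro j
        have e1 : ∫ ω in s, G (n + 1) j ω ∂μ = ∫ ω in s, raoF ℱ μ φ ψ (n + 1) j ω ∂μ :=
          setIntegral_condExp (ℱ.le (n + 1)) (hFint (n + 1) j) (ℱ.mono (Nat.le_succ n) s hs)
        have e2 : ∫ ω in s, G n (j + 1) ω ∂μ = ∫ ω in s, raoF ℱ μ φ ψ n (j + 1) ω ∂μ :=
          setIntegral_condExp (ℱ.le n) (hFint n (j + 1)) hs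
        rw [e1, e2, raoF_succ_bot]
        rw [integral_add ((hφi n).integrableOn) ((hFint (n + 1) j).integrableOn)]
        have : 0 ≤ ∫ ω in s, φ n ω ∂μ := setIntegral_nonneg hsm' fun ω _ => hφ0 n ω
        linarith
      have hbC : (⨆ j, ENNReal.ofReal (∫ ω in s, G n j ω ∂μ)) ≤ ENNReal.ofReal C :=
        iSup_le fun j => ENNReal.ofReal_le_ofReal (hset_le_C n j s hsm')
      refine ENNReal.toReal_mono (lt_of_le_of_lt hbC ENNReal.ofReal_lt_top).ne ?_
      exact iSup_le fun j => le_iSup_of_le (j + 1) (ENNReal.ofReal_le_ofReal (hle j))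
    -- conclude via trim
    have hsm : StronglyMeasurable[ℱ n] (A n - μ[A (n + 1)|ℱ n]) :=
      (hAadp n).stronglyMeasurable.sub stronglyMeasurable_condExp
    have hint2 : Integrable (A n - μ[A (n + 1)|ℱ n]) μ := (hAint n).sub integrable_condExp
    have h0 : 0 ≤ᵐ[μ.trim (ℱ.le n)] (A n - μ[A (n + 1)|ℱ n]) := by
      refine ae_nonneg_of_forall_setIntegral_nonneg (hint2.trim (ℱ.le n) hsm) ?_
      intro s hs hμs
      rw [← setIntegral_trim (ℱ.le n) hsm hs]
      have h1 : ∫ ω in s, (A n - μ[A (n + 1)|ℱ n]) ω ∂μ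
          = (∫ ω in s, A n ω ∂μ) - ∫ ω in s, (μ[A (n + 1)|ℱ n]) ω ∂μ := by
        exact integral_sub ((hAint n).integrableOn) (integrable_condExp.integrableOn)
      rw [h1, setIntegral_condExp (ℱ.le n) (hAint (n + 1)) hs]
      linarith [hset s hs]
    have h0' : 0 ≤ᵐ[μ] (A n - μ[A (n + 1)|ℱ n]) := ae_le_of_ae_le_trim h0
    filter_upwards [h0'] with ω hω
    simpa [Pi.sub_apply, sub_nonneg] using hω
  exact ⟨A, hAadp, hAint, hA0, hsuper, htends⟩

/-- Telescoping: conditioning the signed sums on `ℱ n` recovers `X n`. -/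
lemma rao_tele (X : ℕ → Ω → ℝ) (hadp : Adapted ℱ X) (hXi : ∀ n, Integrable (X n) μ)
    (n j : ℕ) :
    μ[raoF ℱ μ (fun k ω => X k ω - (μ[X (k + 1)|ℱ k]) ω) X n j|ℱ n] =ᵐ[μ] X n := by
  set d : ℕ → Ω → ℝ := fun k ω => X k ω - (μ[X (k + 1)|ℱ k]) ω with hd
  have hdint : ∀ k, Integrable (d k) μ := fun k => (hXi k).sub integrable_condExp
  induction j with
  | zero =>
    have h0 : raoF ℱ μ d X n 0 = X n := by
      funext ω; simp [raoF]
    rw [h0, condExp_of_stronglyMeasurable (ℱ.le n) (hadp n).stronglyMeasurable (hXi n)]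
  | succ j ih =>
    have heq : raoF ℱ μ d X n (j + 1) =
        raoF ℱ μ d X n j + (X (n + j + 1) - μ[X (n + j + 1)|ℱ (n + j)]) := by
      funext ω
      simp only [raoF, Pi.add_apply, Pi.sub_apply, hd]
      rw [show n + (j + 1) = (n + j) + 1 from rfl,
        Finset.sum_Ico_succ_top (Nat.le_add_right n j)]
      ring
    rw [heq]
    refine (condExp_add (raoF_int ℱ d X hdint hXi n j)
      ((hXi _).sub integrable_condExp) _).trans ?_
    have h2 : μ[X (n + j + 1) - μ[X (n + j + 1)|ℱ (n + j)]|ℱ n] =ᵐ[μ] 0 := by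
      refine (condExp_sub (hXi _) integrable_condExp _).trans ?_
      have ht := condExp_condExp_of_le (μ := μ) (f := X (n + j + 1))
        (ℱ.mono (Nat.le_add_right n j)) (ℱ.le (n + j))
      filter_upwards [ht] with ω hω
      simp only [Pi.sub_apply, Pi.zero_apply, hω, sub_self]
    filter_upwards [ih, h2] with ω h1ω h2ω
    simp only [Pi.add_apply] at *
    rw [h2ω]
    simpa using h1ω

/-- The variation bound controls all the `raoF` integrals when `φ ≤ |d|`, `ψ ≤ |X|`. -/
lemma rao_bound (X : ℕ → Ω → ℝ) (hXi : ∀ n, Integrable (X n) μ) (C : ℝ)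
    (hC : ∀ (n : ℕ) (t : Fin (n + 1) → ℕ), StrictMono t → t 0 = 0 →
      variationTerm ℱ μ X t ≤ C)
    (φ ψ : ℕ → Ω → ℝ) (hφi : ∀ k, Integrable (φ k) μ) (hψi : ∀ k, Integrable (ψ k) μ)
    (hφle : ∀ k ω, φ k ω ≤ |X k ω - (μ[X (k + 1)|ℱ k]) ω|)
    (hψle : ∀ k ω, ψ k ω ≤ |X k ω|) (n j : ℕ) :
    ∫ ω, raoF ℱ μ φ ψ n j ω ∂μ ≤ C := by
  set d : ℕ → Ω → ℝ := fun k ω => X k ω - (μ[X (k + 1)|ℱ k]) ω with hd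
  have hdint : ∀ k, Integrable (d k) μ := fun k => (hXi k).sub integrable_condExp
  have h1 : ∫ ω, raoF ℱ μ φ ψ n j ω ∂μ
      = (∑ k ∈ Finset.Ico n (n + j), ∫ ω, φ k ω ∂μ) + ∫ ω, ψ (n + j) ω ∂μ := by
    simp only [raoF]
    rw [integral_add (integrable_finset_sum _ fun k _ => hφi k) (hψi _),
      integral_finset_sum _ fun k _ => (hφi k)]
  have h2 : ∀ k, ∫ ω, φ k ω ∂μ ≤ ∫ ω, |d k ω| ∂μ := fun k =>
    integral_mono (hφi k) (hdint k).abs (fun ω => hφle k ω)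
  have h3 : ∫ ω, ψ (n + j) ω ∂μ ≤ ∫ ω, |X (n + j) ω| ∂μ :=
    integral_mono (hψi _) (hXi _).abs (fun ω => hψle _ ω)
  have h4 : (∑ k ∈ Finset.Ico n (n + j), ∫ ω, |d k ω| ∂μ)
      ≤ ∑ k ∈ Finset.range (n + j), ∫ ω, |d k ω| ∂μ := by
    refine Finset.sum_le_sum_of_subset_of_nonneg ?_ fun k _ _ =>
      integral_nonneg fun ω => abs_nonneg _
    intro x hx
    simp only [Finset.mem_Ico, Finset.mem_range] at hx ⊢
    omega
  have hvt : variationTerm ℱ μ X (fun i : Fin ((n + j) + 1) => (i : ℕ))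
      = (∑ k ∈ Finset.range (n + j), ∫ ω, |d k ω| ∂μ) + ∫ ω, |X (n + j) ω| ∂μ := by
    unfold variationTerm
    simp only [Fin.coe_castSucc, Fin.val_succ, Fin.val_last]
    rw [← Fin.sum_univ_eq_sum_range (fun k => ∫ ω, |d k ω| ∂μ) (n + j)]
  have hC' := hC (n + j) (fun i => (i : ℕ)) (fun a b hab => hab) rfl
  rw [hvt] at hC'
  calc ∫ ω, raoF ℱ μ φ ψ n j ω ∂μ
      ≤ (∑ k ∈ Finset.Ico n (n + j), ∫ ω, |d k ω| ∂μ) + ∫ ω, |X (n + j) ω| ∂μ := by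
        rw [h1]; exact add_le_add (Finset.sum_le_sum fun k _ => h2 k) h3
    _ ≤ (∑ k ∈ Finset.range (n + j), ∫ ω, |d k ω| ∂μ) + ∫ ω, |X (n + j) ω| ∂μ :=
        add_le_add_left h4 _
    _ ≤ C := hC'

end Aux

/-- The nonnegative supermartingales form a wedge (closed under addition and
multiplication by nonnegative scalars) which generates the quasimartingales: every
adapted process with integrable marginals and finite variation is a difference of two
nonnegative supermartingales (Rao decomposition). -/
theorem nonneg_supermartingales_wedge_and_rao_decomposition
    {Ω : Type*} {m : MeasurableSpace Ω} {μ : Measure Ω} [IsProbabilityMeasure μ]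
    (ℱ : Filtration ℕ m) :
    (∀ A B : ℕ → Ω → ℝ, Supermartingale A ℱ μ → Supermartingale B ℱ μ →
      (∀ n, 0 ≤ᵐ[μ] A n) → (∀ n, 0 ≤ᵐ[μ] B n) →
      Supermartingale (A + B) ℱ μ ∧ ∀ n, 0 ≤ᵐ[μ] (A + B) n) ∧
    (∀ (c : ℝ), 0 ≤ c → ∀ A : ℕ → Ω → ℝ, Supermartingale A ℱ μ →
      (∀ n, 0 ≤ᵐ[μ] A n) →
      Supermartingale (c • A) ℱ μ ∧ ∀ n, 0 ≤ᵐ[μ] (c • A) n) ∧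
    (∀ X : ℕ → Ω → ℝ, Adapted ℱ X → (∀ n, Integrable (X n) μ) →
      (∃ C : ℝ, ∀ (n : ℕ) (t : Fin (n + 1) → ℕ), StrictMono t → t 0 = 0 →
        variationTerm ℱ μ X t ≤ C) →
      ∃ A B : ℕ → Ω → ℝ, Supermartingale A ℱ μ ∧ Supermartingale B ℱ μ ∧
        (∀ n, 0 ≤ᵐ[μ] A n) ∧ (∀ n, 0 ≤ᵐ[μ] B n) ∧ X = A - B) := by
  refine ⟨?_, ?_, ?_⟩
  · intro A B hA hB h0A h0B
    refine ⟨hA.add hB, fun n => ?_⟩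
    filter_upwards [h0A n, h0B n] with ω h1 h2
    exact add_nonneg h1 h2
  · intro c hc A hA h0A
    refine ⟨hA.smul_nonneg hc, fun n => ?_⟩
    filter_upwards [h0A n] with ω h1
    simpa using mul_nonneg hc h1
  · rintro X hadp hXi ⟨C, hC⟩
    set d : ℕ → Ω → ℝ := fun k ω => X k ω - (μ[X (k + 1)|ℱ k]) ω with hd
    have hdint : ∀ k, Integrable (d k) μ := fun k => (hXi k).sub integrable_condExp
    set φp : ℕ → Ω → ℝ := fun k ω => max (d k ω) 0 with hφp
    set ψp : ℕ → Ω → ℝ := fun k ω => max (X k ω) 0 with hψp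
    set φm : ℕ → Ω → ℝ := fun k ω => max (-d k ω) 0 with hφm
    set ψm : ℕ → Ω → ℝ := fun k ω => max (-X k ω) 0 with hψm
    have hφpi : ∀ k, Integrable (φp k) μ := fun k => (hdint k).pos_part
    have hψpi : ∀ k, Integrable (ψp k) μ := fun k => (hXi k).pos_part
    have hφmi : ∀ k, Integrable (φm k) μ := fun k => ((hdint k).neg).pos_part
    have hψmi : ∀ k, Integrable (ψm k) μ := fun k => ((hXi k).neg).pos_part
    have hφp0 : ∀ k ω, 0 ≤ φp k ω := fun k ω => le_max_right _ _
    have hψp0 : ∀ k ω, 0 ≤ ψp k ω := fun k ω => le_max_right _ _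
    have hφm0 : ∀ k ω, 0 ≤ φm k ω := fun k ω => le_max_right _ _
    have hψm0 : ∀ k ω, 0 ≤ ψm k ω := fun k ω => le_max_right _ _
    -- one-step inequalities
    have hstepp : ∀ k, ψp k ≤ᵐ[μ] φp k + μ[ψp (k + 1)|ℱ k] := by
      intro k
      have h1 : μ[X (k + 1)|ℱ k] ≤ᵐ[μ] μ[ψp (k + 1)|ℱ k] :=
        condExp_mono (hXi _) (hψpi _) (Filter.Eventually.of_forall fun ω => le_max_left _ _)
      have h2 : (0 : Ω → ℝ) ≤ᵐ[μ] μ[ψp (k + 1)|ℱ k] :=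
        condExp_nonneg (Filter.Eventually.of_forall fun ω => le_max_right _ _)
      filter_upwards [h1, h2] with ω hω1 hω2
      simp only [Pi.add_apply, Pi.zero_apply] at hω1 hω2 ⊢
      have hX : X k ω = d k ω + (μ[X (k + 1)|ℱ k]) ω := by simp only [hd]; ring
      have hmax : max (X k ω) 0 ≤ max (d k ω) 0 + max ((μ[X (k + 1)|ℱ k]) ω) 0 := by
        refine max_le ?_ ?_
        · rw [hX]; exact add_le_add (le_max_left _ _) (le_max_left _ _)
        · exact add_nonneg (le_max_right _ _) (le_max_right _ _)
      have hm2 : max ((μ[X (k + 1)|ℱ k]) ω) 0 ≤ (μ[ψp (k + 1)|ℱ k]) ω := max_le hω1 hω2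
      calc ψp k ω ≤ max (d k ω) 0 + max ((μ[X (k + 1)|ℱ k]) ω) 0 := hmax
        _ ≤ φp k ω + (μ[ψp (k + 1)|ℱ k]) ω := add_le_add le_rfl hm2
    have hstepm : ∀ k, ψm k ≤ᵐ[μ] φm k + μ[ψm (k + 1)|ℱ k] := by
      intro k
      have h1 : μ[-X (k + 1)|ℱ k] ≤ᵐ[μ] μ[ψm (k + 1)|ℱ k] :=
        condExp_mono ((hXi _).neg) (hψmi _)
          (Filter.Eventually.of_forall fun ω => le_max_left _ _)
      have hneg : μ[-X (k + 1)|ℱ k] =ᵐ[μ] -μ[X (k + 1)|ℱ k] := condExp_neg _ _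
      have h2 : (0 : Ω → ℝ) ≤ᵐ[μ] μ[ψm (k + 1)|ℱ k] :=
        condExp_nonneg (Filter.Eventually.of_forall fun ω => le_max_right _ _)
      filter_upwards [h1, h2, hneg] with ω hω1 hω2 hω3
      simp only [Pi.add_apply, Pi.zero_apply, Pi.neg_apply] at hω1 hω2 hω3 ⊢
      have hX : -X k ω = -d k ω + -(μ[X (k + 1)|ℱ k]) ω := by simp only [hd]; ring
      have hmax : max (-X k ω) 0 ≤ max (-d k ω) 0 + max (-(μ[X (k + 1)|ℱ k]) ω) 0 := by
        refine max_le ?_ ?_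
        · rw [hX]; exact add_le_add (le_max_left _ _) (le_max_left _ _)
        · exact add_nonneg (le_max_right _ _) (le_max_right _ _)
      have hm2 : max (-(μ[X (k + 1)|ℱ k]) ω) 0 ≤ (μ[ψm (k + 1)|ℱ k]) ω := by
        refine max_le ?_ hω2
        rw [← hω3]; exact hω1
      calc ψm k ω ≤ max (-d k ω) 0 + max (-(μ[X (k + 1)|ℱ k]) ω) 0 := hmax
        _ ≤ φm k ω + (μ[ψm (k + 1)|ℱ k]) ω := add_le_add le_rfl hm2
    -- bounds
    have hCp : ∀ n j, ∫ ω, raoF ℱ μ φp ψp n j ω ∂μ ≤ C :=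
      rao_bound ℱ X hXi C hC φp ψp hφpi hψpi
        (fun k ω => max_le (le_abs_self _) (abs_nonneg _))
        (fun k ω => max_le (le_abs_self _) (abs_nonneg _))
    have hCm : ∀ n j, ∫ ω, raoF ℱ μ φm ψm n j ω ∂μ ≤ C :=
      rao_bound ℱ X hXi C hC φm ψm hφmi hψmi
        (fun k ω => max_le (neg_le_abs _) (abs_nonneg _))
        (fun k ω => max_le (neg_le_abs _) (abs_nonneg _))
    -- Rao construction on both sides
    obtain ⟨A, hAadp, hAint, hA0, hAsuper, hAtends⟩ :=
      rao_aux ℱ φp ψp hφpi hψpi hφp0 hψp0 hstepp C hCp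
    obtain ⟨B', hBadp, hBint, hB0, hBsuper, hBtends⟩ :=
      rao_aux ℱ φm ψm hφmi hψmi hφm0 hψm0 hstepm C hCm
    -- per-j difference identity
    have hdiff : ∀ n j, (fun ω => (μ[raoF ℱ μ φp ψp n j|ℱ n]) ω
        - (μ[raoF ℱ μ φm ψm n j|ℱ n]) ω) =ᵐ[μ] X n := by
      intro n j
      have hFeq : raoF ℱ μ φp ψp n j - raoF ℱ μ φm ψm n j = raoF ℱ μ d X n j := by
        funext ω
        simp only [raoF, Pi.sub_apply, hφp, hψp, hφm, hψm]
        rw [add_sub_add_comm, ← Finset.sum_sub_distrib]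
        simp only [max_zero_sub_eq_self]
      have hsub : μ[raoF ℱ μ φp ψp n j - raoF ℱ μ φm ψm n j|ℱ n] =ᵐ[μ]
          μ[raoF ℱ μ φp ψp n j|ℱ n] - μ[raoF ℱ μ φm ψm n j|ℱ n] :=
        condExp_sub (raoF_int ℱ φp ψp hφpi hψpi n j) (raoF_int ℱ φm ψm hφmi hψmi n j) _
      have htele : μ[raoF ℱ μ d X n j|ℱ n] =ᵐ[μ] X n := rao_tele ℱ X hadp hXi n j
      rw [hFeq] at hsub
      filter_upwards [hsub, htele] with ω h1 h2
      simp only [Pi.sub_apply] at h1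
      rw [← h1, h2]
    -- a.e. identity X n = A n - B' n
    have hXeq : ∀ n, X n =ᵐ[μ] fun ω => A n ω - B' n ω := by
      intro n
      filter_upwards [ae_all_iff.2 fun j => hdiff n j, hAtends n, hBtends n]
        with ω hj hAt hBt
      have h1 : Tendsto (fun j => (μ[raoF ℱ μ φp ψp n j|ℱ n]) ω
          - (μ[raoF ℱ μ φm ψm n j|ℱ n]) ω) atTop (𝓝 (A n ω - B' n ω)) := hAt.sub hBt
      have h2 : Tendsto (fun _ : ℕ => X n ω) atTop (𝓝 (A n ω - B' n ω)) :=
        h1.congr fun j => hj j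
      exact tendsto_nhds_unique tendsto_const_nhds h2
    -- define B and conclude
    refine ⟨A, fun n ω => A n ω - X n ω, supermartingale_nat hAadp.stronglyAdapted hAint hAsuper, ?_, ?_, ?_, ?_⟩
    · refine supermartingale_nat (fun n => ((hAadp n).sub (hadp n)).stronglyMeasurable)
        (fun n => (hAint n).sub (hXi n)) ?_
      intro n
      have e1 : (fun ω => A (n + 1) ω - X (n + 1) ω) =ᵐ[μ] B' (n + 1) := by
        filter_upwards [hXeq (n + 1)] with ω hω
        rw [hω]; ring
      have e2 : μ[fun ω => A (n + 1) ω - X (n + 1) ω|ℱ n] =ᵐ[μ] μ[B' (n + 1)|ℱ n] :=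
        condExp_congr_ae e1
      filter_upwards [e2, hBsuper n, hXeq n] with ω h1 h2 h3
      rw [h1, h3]
      have : B' n ω = A n ω - (A n ω - B' n ω) := by ring
      linarith [h2]
    · exact fun n => Filter.Eventually.of_forall fun ω => hA0 n ω
    · intro n
      filter_upwards [hXeq n] with ω hω
      rw [hω]
      simpa using hB0 n ω
    · funext n ω
      simp only [Pi.sub_apply]
      ring
end
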